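/- The set C = {ab} ∪ {a bⁿ a bⁿ⁺¹ : n ≥ 1} over the alphabet {a,b} is a circular code. -/

import Mathlib

inductive AB : Type | a | b
deriving DecidableEq

open AB

def InStar (C : Set (List AB)) (w : List AB) : Prop :=
  ∃ l : List (List AB), (∀ u ∈ l, u ∈ C) ∧ l.flatten = w

def IsCode (C : Set (List AB)) : Prop :=
  ∀ l l' : List (List AB), (∀ u ∈ l, u ∈ C) → (∀ u ∈ l', u ∈ C) →
    l.flatten = l'.flatten → l = l'

def C : Set (List AB) :=
  {w | w = [a, b] ∨ ∃ n : ℕ, 1 ≤ n ∧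
    w = a :: (List.replicate n b ++ a :: List.replicate (n + 1) b)}

/-! ### Block-level machinery -/

/-- Tileable exponent sequences: chunks `[1]` and `[n, n+1]` with `n ≥ 1`. -/
inductive Til : List ℕ → Prop
  | nil : Til []
  | one {L : List ℕ} : Til L → Til (1 :: L)
  | pair {L : List ℕ} (n : ℕ) : 1 ≤ n → Til L → Til (n :: (n + 1) :: L)

def toWord (l : List ℕ) : List AB := (l.map fun n => a :: List.replicate n b).flatten

@[simp] lemma toWord_nil : toWord [] = [] := rfl

@[simp] lemma toWord_cons (n : ℕ) (l : List ℕ) :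
    toWord (n :: l) = a :: (List.replicate n b ++ toWord l) := rfl

lemma toWord_append (x y : List ℕ) : toWord (x ++ y) = toWord x ++ toWord y := by
  simp [toWord]

lemma Til.append {x y : List ℕ} (hx : Til x) (hy : Til y) : Til (x ++ y) := by
  induction hx with
  | nil => exact hy
  | one _ ih => exact Til.one ih
  | pair n hn _ ih => exact Til.pair n hn ih

/-- Forcing: a tileable list starting with `c ≥ 2` starts with the pair `(c, c+1)`. -/
lemma Til.force {c : ℕ} {L : List ℕ} (h : Til (c :: L)) (hc : 2 ≤ c) :
    ∃ L', L = (c + 1) :: L' ∧ Til L' := by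
  cases h with
  | one h => omega
  | pair n hn h => exact ⟨_, rfl, h⟩

/-- The run lemma: if both `(c :: G).dropLast` and `G` are tileable with `c ≥ 2`,
then the list is the run `c, c+1, ..., c+|G|`; we only need the last value. -/
theorem runA : ∀ (G : List ℕ) (c : ℕ), 2 ≤ c → Til ((c :: G).dropLast) → Til G →
    (c :: G).getLastD 0 = c + G.length
  | [], c, _, _, _ => by simp
  | [x], c, hc, h1, _ => by
    simp only [List.dropLast] at h1
    obtain ⟨L', hL', -⟩ := h1.force hc
    simp at hL'
  | x :: y :: G2, c, hc, h1, h2 => by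
    rw [show ((c :: x :: y :: G2).dropLast) = c :: x :: ((y :: G2).dropLast) by
      simp [List.dropLast]] at h1
    obtain ⟨L', hL', hT⟩ := h1.force hc
    injection hL' with hx hL2
    subst hx
    obtain ⟨L2', hL2', hT2⟩ := h2.force (by omega)
    injection hL2' with hy hG2
    subst hy
    have ih := runA L2' (c + 1 + 1) (by omega) (by rw [← hG2, hL2]; exact hT)
      (hG2 ▸ hT2)
    rw [hG2]
    simp only [List.getLastD_cons, List.length_cons] at ih ⊢
    omega

/-- Splitting a tiling at a boundary: either it splits cleanly, or a pair crosses. -/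
theorem til_split : ∀ (W X Y : List ℕ), Til W → W = X ++ Y →
    (Til X ∧ Til Y) ∨
    (∃ X' n Y', X = X' ++ [n] ∧ Y = (n + 1) :: Y' ∧ 1 ≤ n ∧ Til X' ∧ Til Y') := by
  intro W X Y h
  induction h generalizing X Y with
  | nil =>
    intro hW
    obtain ⟨rfl, rfl⟩ := List.append_eq_nil_iff.mp hW.symm
    exact Or.inl ⟨Til.nil, Til.nil⟩
  | one h ih =>
    intro hW
    cases X with
    | nil =>
      rw [List.nil_append] at hW
      exact Or.inl ⟨Til.nil, hW ▸ Til.one h⟩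
    | cons x X2 =>
      simp only [List.cons_append, List.cons.injEq] at hW
      obtain ⟨rfl, hW⟩ := hW
      rcases ih X2 Y hW with ⟨h1, h2⟩ | ⟨X', n, Y', rfl, rfl, hn, hX, hY⟩
      · exact Or.inl ⟨Til.one h1, h2⟩
      · exact Or.inr ⟨1 :: X', n, Y', rfl, rfl, hn, Til.one hX, hY⟩
  | pair n hn h ih =>
    intro hW
    cases X with
    | nil =>
      rw [List.nil_append] at hW
      exact Or.inl ⟨Til.nil, hW ▸ Til.pair n hn h⟩
    | cons x X2 =>
      simp only [List.cons_append, List.cons.injEq] at hW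
      obtain ⟨rfl, hW⟩ := hW
      cases X2 with
      | nil =>
        simp only [List.nil_append] at hW
        exact Or.inr ⟨[], n, _, rfl, hW.symm, hn, Til.nil, h⟩
      | cons x2 X3 =>
        simp only [List.cons_append, List.cons.injEq] at hW
        obtain ⟨rfl, hW⟩ := hW
        rcases ih X3 Y hW with ⟨h1, h2⟩ | ⟨X', m, Y', rfl, rfl, hm, hX, hY⟩
        · exact Or.inl ⟨Til.pair n hn h1, h2⟩
        · exact Or.inr ⟨n :: (n + 1) :: X', m, Y', rfl, rfl, hm, Til.pair n hn hX, hY⟩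

/-- Core rotation lemma. -/
theorem til_rotate (E F : List ℕ) (h1 : Til (E ++ F)) (h2 : Til (F ++ E)) :
    Til E ∧ Til F := by
  rcases til_split _ E F h1 rfl with ⟨hE, hF⟩ | ⟨E', m, F1, hEe, hFe, hm, hE', hF1⟩
  · exact ⟨hE, hF⟩
  rcases til_split _ F E h2 rfl with ⟨hF, hE⟩ | ⟨F', k, E1, hFc, hEc, hk, hF', hE1⟩
  · exact ⟨hE, hF⟩
  exfalso
  -- E = E' ++ [m], F = (m+1) :: F1, F = F' ++ [k], E = (k+1) :: E1
  have hFlast : ((m + 1) :: F1).getLastD 0 = (m + 1) + F1.length := by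
    refine runA F1 (m + 1) (by omega) ?_ hF1
    rw [← hFe, hFc, List.dropLast_concat]; exact hF'
  have hFlast' : ((m + 1) :: F1).getLastD 0 = k := by
    rw [← hFe, hFc]; simp
  have hElast : ((k + 1) :: E1).getLastD 0 = (k + 1) + E1.length := by
    refine runA E1 (k + 1) (by omega) ?_ hE1
    rw [← hEc, hEe, List.dropLast_concat]; exact hE'
  have hElast' : ((k + 1) :: E1).getLastD 0 = m := by
    rw [← hEc, hEe]; simp
  omega

/-! ### Word-level bridge -/

lemma toWord_head : ∀ l : List ℕ, toWord l = [] ∨ ∃ t, toWord l = a :: t := by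
  intro l; cases l with
  | nil => exact Or.inl rfl
  | cons n l => exact Or.inr ⟨_, rfl⟩

/-- Peeling equal runs of `b` in front of `a`-headed (or empty) words. -/
lemma repb : ∀ (m m' : ℕ) (x y : List AB),
    (x = [] ∨ ∃ t, x = a :: t) → (y = [] ∨ ∃ t, y = a :: t) →
    List.replicate m b ++ x = List.replicate m' b ++ y → m = m' ∧ x = y := by
  intro m
  induction m with
  | zero =>
    intro m' x y hx hy h
    cases m' with
    | zero => simpa using h
    | succ s =>
      exfalso
      simp only [List.replicate_succ, List.nil_append, List.cons_append] at h
      rcases hx with rfl | ⟨t, rfl⟩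
      · exact absurd h (by simp)
      · exact absurd (congrArg (List.head?) h) (by simp)
  | succ s ih =>
    intro m' x y hx hy h
    cases m' with
    | zero =>
      exfalso
      simp only [List.replicate_succ, List.nil_append, List.cons_append] at h
      rcases hy with rfl | ⟨t, rfl⟩
      · exact absurd h (by simp)
      · exact absurd (congrArg (List.head?) h) (by simp)
    | succ s' =>
      simp only [List.replicate_succ, List.cons_append, List.cons.injEq] at h
      obtain ⟨-, h⟩ := h
      obtain ⟨h1, h2⟩ := ih s' x y hx hy h
      exact ⟨by omega, h2⟩

lemma toWord_inj : ∀ l l' : List ℕ, toWord l = toWord l' → l = l' := by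
  intro l
  induction l with
  | nil =>
    intro l' h
    cases l' with
    | nil => rfl
    | cons n t => exact absurd h.symm (by simp)
  | cons n l ih =>
    intro l' h
    cases l' with
    | nil => exact absurd h (by simp)
    | cons n' l' =>
      simp only [toWord_cons, List.cons.injEq, true_and] at h
      obtain ⟨h1, h2⟩ := repb n n' _ _ (toWord_head l) (toWord_head l') h
      rw [h1, ih l' h2]

/-- A run of `b`s on the left must be absorbed by `u'` if the remainder starts with `a`. -/
lemma peel_rep : ∀ (n : ℕ) (u' v' w : List AB),
    List.replicate n b ++ w = u' ++ a :: v' →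
    ∃ u'', u' = List.replicate n b ++ u'' ∧ w = u'' ++ a :: v' := by
  intro n
  induction n with
  | zero => intro u' v' w h; exact ⟨u', by simp, by simpa using h⟩
  | succ s ih =>
    intro u' v' w h
    simp only [List.replicate_succ, List.cons_append] at h
    cases u' with
    | nil =>
      exfalso
      simp only [List.nil_append] at h
      exact absurd (congrArg List.head? h) (by simp)
    | cons c u2 =>
      simp only [List.cons_append, List.cons.injEq] at h
      obtain ⟨rfl, h⟩ := h
      obtain ⟨u'', h1, h2⟩ := ih u2 v' w h
      exact ⟨u'', by rw [List.replicate_succ, List.cons_append, h1], h2⟩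

/-- Splitting a `toWord` at a boundary where the right part starts with `a`. -/
lemma word_split : ∀ (L : List ℕ) (u v' : List AB), toWord L = u ++ a :: v' →
    ∃ P Q, L = P ++ Q ∧ toWord P = u ∧ toWord Q = a :: v' := by
  intro L
  induction L with
  | nil => intro u v' h; exact absurd h.symm (by simp)
  | cons n L ih =>
    intro u v' h
    cases u with
    | nil => exact ⟨[], n :: L, rfl, rfl, by simpa using h⟩
    | cons c u' =>
      simp only [toWord_cons, List.cons_append, List.cons.injEq] at h
      obtain ⟨rfl, h⟩ := h
      obtain ⟨u'', h1, h2⟩ := peel_rep n u' v' (toWord L) h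
      obtain ⟨P', Q, hLQ, hP', hQ⟩ := ih u'' v' h2
      exact ⟨n :: P', Q, by rw [hLQ]; rfl, by rw [toWord_cons, hP', h1], hQ⟩

/-- `InStar C` is `toWord` of a tileable list. -/
lemma instar_iff (w : List AB) : InStar C w ↔ ∃ L, Til L ∧ toWord L = w := by
  constructor
  · rintro ⟨l, hl, rfl⟩
    induction l with
    | nil => exact ⟨[], Til.nil, rfl⟩
    | cons c l ih =>
      obtain ⟨L, hL, hw⟩ := ih (fun u hu => hl u (List.mem_cons_of_mem _ hu))
      rcases hl c (List.mem_cons_self) with rfl | ⟨n, hn, rfl⟩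
      · exact ⟨1 :: L, Til.one hL, by simp [toWord_cons, hw, List.replicate_succ]⟩
      · exact ⟨n :: (n + 1) :: L, Til.pair n hn hL,
          by simp [toWord_cons, hw, List.flatten_cons]⟩
  · rintro ⟨L, hL, rfl⟩
    induction hL with
    | nil => exact ⟨[], by simp, rfl⟩
    | one h ih =>
      obtain ⟨l, hl, hfl⟩ := ih
      refine ⟨[a, b] :: l, ?_, ?_⟩
      · intro u hu
        rcases List.mem_cons.mp hu with rfl | hu
        · exact Or.inl rfl
        · exact hl u hu
      · simp [hfl, toWord_cons, List.replicate_succ]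
    | pair n hn h ih =>
      obtain ⟨l, hl, hfl⟩ := ih
      refine ⟨(a :: (List.replicate n b ++ a :: List.replicate (n + 1) b)) :: l, ?_, ?_⟩
      · intro u hu
        rcases List.mem_cons.mp hu with rfl | hu
        · exact Or.inr ⟨n, hn, rfl⟩
        · exact hl u hu
      · simp [hfl, toWord_cons]

/-! ### The code property -/

lemma rev_ab : ([a, b] : List AB).reverse = List.replicate 1 b ++ [a] := rfl

lemma rev_long (n : ℕ) : (a :: (List.replicate n b ++ a :: List.replicate (n + 1) b)).reverse
    = List.replicate (n + 1) b ++ a :: (List.replicate n b ++ [a]) := by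
  simp

lemma C_ne_nil {w : List AB} (hw : w ∈ C) : w ≠ [] := by
  rcases hw with rfl | ⟨n, hn, rfl⟩ <;> simp

/-- `C` is a suffix code: two `C`-words sharing a common right-extension are equal. -/
lemma code_suffix {w w' : List AB} (hw : w ∈ C) (hw' : w' ∈ C) (s s' : List AB)
    (h : s ++ w = s' ++ w') : w = w' := by
  have h' : w.reverse ++ s.reverse = w'.reverse ++ s'.reverse := by
    simpa [List.reverse_append] using congrArg List.reverse h
  rcases hw with rfl | ⟨n, hn, rfl⟩ <;> rcases hw' with rfl | ⟨m, hm, rfl⟩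
  · rfl
  · exfalso
    rw [rev_ab, rev_long] at h'
    simp only [List.append_assoc, List.cons_append, List.singleton_append] at h'
    obtain ⟨h1, -⟩ := repb _ _ _ _ (Or.inr ⟨_, rfl⟩) (Or.inr ⟨_, rfl⟩) h'
    omega
  · exfalso
    rw [rev_ab, rev_long] at h'
    simp only [List.append_assoc, List.cons_append, List.singleton_append] at h'
    obtain ⟨h1, -⟩ := repb _ _ _ _ (Or.inr ⟨_, rfl⟩) (Or.inr ⟨_, rfl⟩) h'
    omega
  · rw [rev_long, rev_long] at h'
    simp only [List.append_assoc, List.cons_append, List.singleton_append] at h'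
    obtain ⟨h1, -⟩ := repb _ _ _ _ (Or.inr ⟨_, rfl⟩) (Or.inr ⟨_, rfl⟩) h'
    have : n = m := by omega
    subst this; rfl

lemma isCodeC : IsCode C := by
  intro l l' hl hl' h
  induction l using List.reverseRecOn generalizing l' with
  | nil =>
    cases l' with
    | nil => rfl
    | cons w t =>
      exfalso
      have hw : w ≠ [] := C_ne_nil (hl' w (List.mem_cons_self))
      rw [List.flatten_nil, List.flatten_cons] at h
      cases w with
      | nil => exact hw rfl
      | cons c w2 => exact absurd h (by simp)
  | append_singleton L w ih =>
    cases l' using List.reverseRecOn with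
    | nil =>
      exfalso
      have hw : w ≠ [] := C_ne_nil (hl w (by simp))
      rw [List.flatten_append, List.flatten_cons] at h
      simp only [List.flatten_nil] at h
      rcases List.append_eq_nil_iff.mp h with ⟨-, h2⟩
      rcases List.append_eq_nil_iff.mp h2 with ⟨h3, -⟩
      exact hw h3
    | append_singleton L' w' =>
      have hw : w ∈ C := hl w (by simp)
      have hw' : w' ∈ C := hl' w' (by simp)
      have h2 : L.flatten ++ w = L'.flatten ++ w' := by
        simpa [List.flatten_append] using h
      have hww : w = w' := code_suffix hw hw' _ _ h2
      subst hww
      have h3 : L.flatten = L'.flatten := by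
        exact List.append_cancel_right h2
      have h4 : L = L' := ih L' (fun u hu => hl u (List.mem_append_left _ hu))
        (fun u hu => hl' u (List.mem_append_left _ hu)) h3
      rw [h4]

/-! ### Main theorem -/

lemma head_a {w w' : List AB} {L : List ℕ} (e : toWord L = w ++ w') (hw : w ≠ []) :
    ∃ t, w = a :: t := by
  rcases toWord_head L with h3 | ⟨t, ht⟩
  · rw [e] at h3
    exact absurd (List.append_eq_nil_iff.mp h3).1 hw
  · rw [e] at ht
    cases w with
    | nil => exact absurd rfl hw
    | cons c w2 =>
      simp only [List.cons_append, List.cons.injEq] at ht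
      exact ⟨w2, by rw [ht.1]⟩

/-- `C = {ab} ∪ {a bⁿ a bⁿ⁺¹ : n ≥ 1}` is a circular code. -/
theorem stmt1 :
    IsCode C ∧
    ∀ u v : List AB, InStar C (u ++ v) → InStar C (v ++ u) →
      InStar C u ∧ InStar C v := by
  refine ⟨isCodeC, ?_⟩
  intro u v h1 h2
  by_cases hu : u = []
  · subst hu
    simp only [List.nil_append, List.append_nil] at h1 h2
    exact ⟨⟨[], by simp, rfl⟩, h1⟩
  by_cases hv : v = []
  · subst hv
    simp only [List.nil_append, List.append_nil] at h1 h2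
    exact ⟨h1, ⟨[], by simp, rfl⟩⟩
  obtain ⟨L1, t1, e1⟩ := (instar_iff _).mp h1
  obtain ⟨L2, t2, e2⟩ := (instar_iff _).mp h2
  obtain ⟨u', rfl⟩ := head_a e1 hu
  obtain ⟨v', rfl⟩ := head_a e2 hv
  obtain ⟨P1, Q1, hL1, hP1, hQ1⟩ := word_split L1 (a :: u') v' e1
  obtain ⟨P2, Q2, hL2, hP2, hQ2⟩ := word_split L2 (a :: v') u' e2
  have hQ2P1 : Q2 = P1 := toWord_inj _ _ (by rw [hQ2, hP1])
  have hQ1P2 : Q1 = P2 := toWord_inj _ _ (by rw [hQ1, hP2])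
  rw [hL1] at t1
  rw [hL2, ← hQ1P2, hQ2P1] at t2
  obtain ⟨tP, tQ⟩ := til_rotate P1 Q1 t1 t2
  exact ⟨(instar_iff _).mpr ⟨P1, tP, hP1⟩, (instar_iff _).mpr ⟨Q1, tQ, hQ1⟩⟩
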